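/- Let η, c > 0 with ηc/3 ≠ 2, t0 ≥ 1, and α_i = c/(t0+i). Then E4 := Σ_{i=t0}^{t-1} (Π_{j=i+1}^{t-1}(1 - (η/3)α_j)) α_i² ≤ (4c²/(t+t0)^{ηc/3}) · Σ_{i=t0}^{t-1} 1/(t0+i+1)^{2 - ηc/3}, provided t0 is large enough that (η/3)α_j < 1 for all j and ((t0+i+1)/(t0+i))² ≤ 4. -/

import Mathlib

open Finset Real

theorem E4_bound (η c : ℝ) (hη : 0 < η) (hc : 0 < c) (hne : η * c / 3 ≠ 2)
    (t0 t : ℕ) (ht0 : 1 ≤ t0) (ht : t0 < t)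
    (α : ℕ → ℝ) (hα : ∀ i, α i = c / ((t0 : ℝ) + i))
    (hsmall : ∀ j : ℕ, η / 3 * α j < 1)
    (hratio : ∀ i : ℕ, t0 ≤ i → (((t0 : ℝ) + i + 1) / ((t0 : ℝ) + i)) ^ 2 ≤ 4) :
    (∑ i ∈ Finset.Ico t0 t,
        (∏ j ∈ Finset.Ico (i + 1) t, (1 - η / 3 * α j)) * (α i) ^ 2) ≤
      (4 * c ^ 2 / ((t : ℝ) + t0) ^ (η * c / 3)) *
        ∑ i ∈ Finset.Ico t0 t, 1 / ((t0 : ℝ) + i + 1) ^ (2 - η * c / 3) := by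
  have ht0R : (1:ℝ) ≤ (t0:ℝ) := by exact_mod_cast ht0
  have hαpos : ∀ j : ℕ, 0 < α j := by
    intro j; rw [hα]; positivity
  rw [Finset.mul_sum]
  apply Finset.sum_le_sum
  intro i hi
  obtain ⟨hi1, hi2⟩ := Finset.mem_Ico.mp hi
  set a : ℝ := (t:ℝ) + t0 with ha
  set b : ℝ := (t0:ℝ) + i + 1 with hb
  have hia : (0:ℝ) < (t0:ℝ) + i := by positivity
  have hbpos : (0:ℝ) < b := by rw [hb]; positivity
  have hapos : (0:ℝ) < a := by rw [ha]; positivity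
  -- lower bound for the harmonic sum via telescoping logs
  have hsum : Real.log a - Real.log b ≤ ∑ j ∈ Finset.Ico (i+1) t, (1 / ((t0:ℝ) + j)) := by
    have htel : ∑ j ∈ Finset.Ico (i+1) t,
        (Real.log ((t0:ℝ) + ((j+1 : ℕ) : ℝ)) - Real.log ((t0:ℝ) + j))
        = Real.log ((t0:ℝ) + t) - Real.log ((t0:ℝ) + ((i+1 : ℕ) : ℝ)) := by
      rw [Finset.sum_Ico_eq_sub _ (by omega),
        Finset.sum_range_sub (fun n => Real.log ((t0:ℝ) + n)),
        Finset.sum_range_sub (fun n => Real.log ((t0:ℝ) + n))]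
      push_cast
      ring
    calc Real.log a - Real.log b
        = ∑ j ∈ Finset.Ico (i+1) t,
            (Real.log ((t0:ℝ) + ((j+1 : ℕ) : ℝ)) - Real.log ((t0:ℝ) + j)) := by
          rw [htel]
          have h1 : a = (t0:ℝ) + t := by rw [ha]; ring
          have h2 : b = (t0:ℝ) + ((i+1 : ℕ) : ℝ) := by rw [hb]; push_cast; ring
          rw [h1, h2]
      _ ≤ _ := by
          apply Finset.sum_le_sum
          intro j _
          push_cast
          have hj : (0:ℝ) < (t0:ℝ) + j := by positivity
          have hlog := Real.log_le_sub_one_of_pos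
            (show (0:ℝ) < ((t0:ℝ) + (j+1)) / ((t0:ℝ) + j) by positivity)
          rw [← Real.log_div (by positivity) (by positivity)]
          calc Real.log (((t0:ℝ)+(j+1))/((t0:ℝ)+j))
              ≤ ((t0:ℝ)+(j+1))/((t0:ℝ)+j) - 1 := hlog
            _ = 1/((t0:ℝ)+j) := by field_simp; ring
  -- product bound
  have hprodnn : ∀ j ∈ Finset.Ico (i+1) t, (0:ℝ) ≤ 1 - η/3 * α j := by
    intro j _; linarith [hsmall j]
  have hprod : (∏ j ∈ Finset.Ico (i+1) t, (1 - η/3 * α j))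
      ≤ b ^ (η*c/3) / a ^ (η*c/3) := by
    have hP1 : (∏ j ∈ Finset.Ico (i+1) t, (1 - η/3 * α j))
        ≤ Real.exp (-(η/3) * (c * (Real.log a - Real.log b))) := by
      calc (∏ j ∈ Finset.Ico (i+1) t, (1 - η/3 * α j))
          ≤ ∏ j ∈ Finset.Ico (i+1) t, Real.exp (-(η/3 * α j)) := by
            apply Finset.prod_le_prod hprodnn
            intro j _
            have := Real.add_one_le_exp (-(η/3 * α j))
            linarith
        _ = Real.exp (∑ j ∈ Finset.Ico (i+1) t, -(η/3 * α j)) :=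
            (Real.exp_sum _ _).symm
        _ ≤ Real.exp (-(η/3) * (c * (Real.log a - Real.log b))) := by
            apply Real.exp_le_exp.mpr
            have hrw : ∑ j ∈ Finset.Ico (i+1) t, -(η/3 * α j)
                = -(η/3) * (c * ∑ j ∈ Finset.Ico (i+1) t, (1 / ((t0:ℝ) + j))) := by
              rw [Finset.mul_sum, Finset.mul_sum]
              apply Finset.sum_congr rfl
              intro j _
              have hj : (0:ℝ) < (t0:ℝ) + j := by positivity
              rw [hα]
              field_simp
            rw [hrw]
            have hη3 : (0:ℝ) < η/3 := by positivity
            nlinarith [mul_le_mul_of_nonneg_left hsum hc.le]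
    have hexp : Real.exp (-(η/3) * (c * (Real.log a - Real.log b)))
        = b ^ (η*c/3) / a ^ (η*c/3) := by
      rw [Real.rpow_def_of_pos hbpos, Real.rpow_def_of_pos hapos, ← Real.exp_sub]
      congr 1
      ring
    linarith [hP1, hexp.le, hexp.ge]
  -- bound on α i ^ 2
  have hα2 : (α i)^2 ≤ 4 * c^2 / b^2 := by
    rw [hα]
    have hr := hratio i hi1
    rw [← hb] at hr
    rw [div_pow] at hr
    rw [div_pow, div_le_div_iff₀ (by positivity) (by positivity)]
    rw [div_le_iff₀ (by positivity)] at hr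
    nlinarith [sq_nonneg c, hr]
  -- combine
  have hPnn : (0:ℝ) ≤ ∏ j ∈ Finset.Ico (i+1) t, (1 - η/3 * α j) :=
    Finset.prod_nonneg hprodnn
  have hbe : (1:ℝ) / b ^ (2 - η*c/3) = b ^ (η*c/3) / b^2 := by
    rw [Real.rpow_sub hbpos, Real.rpow_two, one_div_div]
  calc (∏ j ∈ Finset.Ico (i+1) t, (1 - η/3 * α j)) * (α i)^2
      ≤ (b ^ (η*c/3) / a ^ (η*c/3)) * (4 * c^2 / b^2) :=
        mul_le_mul hprod hα2 (sq_nonneg _) (by positivity)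
    _ = 4 * c^2 / a ^ (η*c/3) * (1 / b ^ (2 - η*c/3)) := by
        rw [hbe]; ring
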